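/- Let f : ℝⁿ → ℝ be continuously differentiable and let g be as defined in the context. Let 0 < a ≤ b < ∞, and let {x^k} ⊂ ℝⁿ, {μ_k} ⊂ [a, b], and {x̄^k} ⊂ ℝⁿ be sequences with x̄^k ∈ prox_{μ_k⁻¹ g}(x^k − μ_k⁻¹∇f(x^k)) for every k. If x^k → x*, x̄^k → x*, and μ_k → μ* ∈ [a, b], then x* ∈ prox_{μ*⁻¹ g}(x* − μ*⁻¹∇f(x*)); that is, x* is an L-stationary point of the problem min_{x} f(x) + g(x). -/

import Mathlib

open Filter
open scoped Classical

noncomputable section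

/-- The box `Ω = {x : l ≤ x ≤ u}` in ℝⁿ. -/
def Om {n : ℕ} (l u : Fin n → ℝ) : Set (EuclideanSpace ℝ (Fin n)) :=
  {x | ∀ i, l i ≤ x i ∧ x i ≤ u i}

/-- The ℓ₀-norm (number of nonzero entries) of a vector. -/
def zeroNorm {m : ℕ} (v : Fin m → ℝ) : ℕ := (Function.support v).ncard

/-- `prox_{μ⁻¹ g}(z)`: the set of minimizers of `(μ/2)‖·−z‖² + λ₁‖B·‖₀ + λ₂‖·‖₀` over Ω. -/
def proxSet {n p : ℕ} (B : Matrix (Fin p) (Fin n) ℝ) (lam1 lam2 : ℝ) (l u : Fin n → ℝ)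
    (μ : ℝ) (z : EuclideanSpace ℝ (Fin n)) : Set (EuclideanSpace ℝ (Fin n)) :=
  {x | x ∈ Om l u ∧ ∀ y ∈ Om l u,
    μ / 2 * ‖x - z‖ ^ 2 + lam1 * (zeroNorm (B.mulVec x) : ℝ) + lam2 * (zeroNorm x : ℝ) ≤
    μ / 2 * ‖y - z‖ ^ 2 + lam1 * (zeroNorm (B.mulVec y) : ℝ) + lam2 * (zeroNorm y : ℝ)}

/-- Lower semicontinuity of `zeroNorm` along a pointwise-convergent sequence. -/
lemma zeroNorm_lsc {m : ℕ} (v : ℕ → Fin m → ℝ) (w : Fin m → ℝ)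
    (h : ∀ i, Tendsto (fun k => v k i) atTop (nhds (w i))) :
    ∀ᶠ k in atTop, zeroNorm w ≤ zeroNorm (v k) := by
  have hall : ∀ᶠ k in atTop, ∀ i, w i ≠ 0 → v k i ≠ 0 := by
    rw [eventually_all]
    intro i
    by_cases hwi : w i = 0
    · exact Eventually.of_forall fun k h' => absurd hwi h'
    · exact ((h i).eventually_ne hwi).mono fun k hk _ => hk
  refine hall.mono fun k hk => ?_
  exact Set.ncard_le_ncard (fun i hi => hk i hi) (Set.toFinite _)

/-- outer semicontinuity of the proximal mapping of `g` along PG iterates: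
if `x̄^k ∈ prox_{μ_k⁻¹g}(x^k − μ_k⁻¹∇f(x^k))` with `μ_k ∈ [a,b]`, `x^k → x*`, `x̄^k → x*`
and `μ_k → μ* ∈ [a,b]`, then `x* ∈ prox_{μ*⁻¹g}(x* − μ*⁻¹∇f(x*))`, i.e. `x*` is an
L-stationary point of `min f + g`. -/
theorem stmt16 {n p : ℕ} (B : Matrix (Fin p) (Fin n) ℝ) (lam1 lam2 : ℝ)
    (hlam1 : 0 < lam1) (hlam2 : 0 < lam2)
    (l u : Fin n → ℝ) (hl : ∀ i, l i ≤ 0) (hu : ∀ i, 0 ≤ u i)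
    (f : EuclideanSpace ℝ (Fin n) → ℝ) (hf : ContDiff ℝ 1 f)
    (a b : ℝ) (ha : 0 < a) (hab : a ≤ b)
    (x xbar : ℕ → EuclideanSpace ℝ (Fin n)) (μ : ℕ → ℝ)
    (hμ : ∀ k, a ≤ μ k ∧ μ k ≤ b)
    (hprox : ∀ k, xbar k ∈
      proxSet B lam1 lam2 l u (μ k) (x k - (μ k)⁻¹ • gradient f (x k)))
    (xstar : EuclideanSpace ℝ (Fin n)) (μstar : ℝ)
    (hxlim : Tendsto x atTop (nhds xstar))
    (hxbarlim : Tendsto xbar atTop (nhds xstar))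
    (hμlim : Tendsto μ atTop (nhds μstar))
    (hμstar : a ≤ μstar ∧ μstar ≤ b) :
    xstar ∈ proxSet B lam1 lam2 l u μstar (xstar - μstar⁻¹ • gradient f xstar) := by
  have hμsne : μstar ≠ 0 := ne_of_gt (lt_of_lt_of_le ha hμstar.1)
  have hgrad : Continuous (gradient f) := by
    unfold gradient
    exact (InnerProductSpace.toDual ℝ _).symm.continuous.comp (hf.continuous_fderiv one_ne_zero)
  -- coordinate convergence of xbar
  have hcoord : ∀ i, Tendsto (fun k => xbar k i) atTop (nhds (xstar i)) := fun i =>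
    ((EuclideanSpace.proj i).continuous.tendsto xstar).comp hxbarlim
  -- membership in the box
  have hmem : xstar ∈ Om l u := by
    intro i
    constructor
    · exact ge_of_tendsto (hcoord i) (Eventually.of_forall fun k => ((hprox k).1 i).1)
    · exact le_of_tendsto (hcoord i) (Eventually.of_forall fun k => ((hprox k).1 i).2)
  refine ⟨hmem, fun y hy => ?_⟩
  set z : ℕ → EuclideanSpace ℝ (Fin n) :=
    fun k => x k - (μ k)⁻¹ • gradient f (x k) with hz
  set zs : EuclideanSpace ℝ (Fin n) := xstar - μstar⁻¹ • gradient f xstar with hzs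
  have hzlim : Tendsto z atTop (nhds zs) := by
    apply hxlim.sub
    exact (hμlim.inv₀ hμsne).smul ((hgrad.tendsto xstar).comp hxlim)
  -- quadratic terms
  have hq1 : Tendsto (fun k => μ k / 2 * ‖xbar k - z k‖ ^ 2) atTop
      (nhds (μstar / 2 * ‖xstar - zs‖ ^ 2)) := by
    exact (hμlim.div_const 2).mul (((hxbarlim.sub hzlim).norm).pow 2)
  have hq2 : Tendsto (fun k => μ k / 2 * ‖y - z k‖ ^ 2) atTop
      (nhds (μstar / 2 * ‖y - zs‖ ^ 2)) := by
    exact (hμlim.div_const 2).mul ((((tendsto_const_nhds (x := y)).sub hzlim).norm).pow 2)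
  -- lsc terms
  have hBcoord : ∀ i, Tendsto (fun k => B.mulVec (xbar k) i) atTop
      (nhds (B.mulVec xstar i)) := by
    intro i
    simp only [Matrix.mulVec, dotProduct]
    exact tendsto_finset_sum _ fun j _ => (hcoord j).const_mul _
  have hlsc1 := zeroNorm_lsc (fun k => B.mulVec (xbar k)) (B.mulVec xstar) hBcoord
  have hlsc2 := zeroNorm_lsc (fun k => (xbar k : Fin n → ℝ)) (xstar : Fin n → ℝ) hcoord
  -- main limit argument
  have key : ∀ᶠ k in atTop,
      μ k / 2 * ‖xbar k - z k‖ ^ 2 + lam1 * (zeroNorm (B.mulVec xstar) : ℝ)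
        + lam2 * (zeroNorm xstar : ℝ) ≤
      μ k / 2 * ‖y - z k‖ ^ 2 + lam1 * (zeroNorm (B.mulVec y) : ℝ)
        + lam2 * (zeroNorm y : ℝ) := by
    filter_upwards [hlsc1, hlsc2] with k h1 h2
    have h1' : lam1 * (zeroNorm (B.mulVec xstar) : ℝ) ≤ lam1 * (zeroNorm (B.mulVec (xbar k)) : ℝ) := by
      have : (zeroNorm (B.mulVec xstar) : ℝ) ≤ (zeroNorm (B.mulVec (xbar k)) : ℝ) := Nat.cast_le.mpr h1
      nlinarith
    have h2' : lam2 * (zeroNorm xstar : ℝ) ≤ lam2 * (zeroNorm (xbar k) : ℝ) := by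
      have : (zeroNorm xstar : ℝ) ≤ (zeroNorm (xbar k) : ℝ) := Nat.cast_le.mpr h2
      nlinarith
    have := (hprox k).2 y hy
    linarith
  exact le_of_tendsto_of_tendsto
    ((hq1.add tendsto_const_nhds).add tendsto_const_nhds)
    ((hq2.add tendsto_const_nhds).add tendsto_const_nhds) key


end
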